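/- A list Z = (z¹, …, zᵐ) of m points in ℝ³ projects onto a list X = (x¹, …, xᵐ) of m points in ℝ² by an affine projection if and only if there exist c₁, c₂ ∈ ℝ, an ordered triple (i,j,k) ∈ {(1,2,3), (1,3,2), (2,3,1)}, and an invertible affine transformation A of ℝ² such that xʳ = A(z_iʳ + c₁ z_kʳ, z_jʳ + c₂ z_kʳ) for all r = 1, …, m. -/

import Mathlib

lemma rank2_iff_surj (L : Matrix (Fin 2) (Fin 3) ℝ) :
    L.rank = 2 ↔ Function.Surjective L.mulVec := by
  have hco : ⇑L.mulVecLin = L.mulVec := funext fun v => Matrix.mulVecLin_apply _ _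
  rw [Matrix.rank, ← hco]
  constructor
  · intro h
    rw [← LinearMap.range_eq_top]
    apply Submodule.eq_top_of_finrank_eq
    simp [h]
  · intro h
    have : LinearMap.range L.mulVecLin = ⊤ := LinearMap.range_eq_top.mpr h
    rw [this]
    simp

lemma exists_minor (L : Matrix (Fin 2) (Fin 3) ℝ) (h : Function.Surjective L.mulVec) :
    L 0 0 * L 1 1 - L 0 1 * L 1 0 ≠ 0 ∨
    L 0 0 * L 1 2 - L 0 2 * L 1 0 ≠ 0 ∨
    L 0 1 * L 1 2 - L 0 2 * L 1 1 ≠ 0 := by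
  by_contra hc
  push_neg at hc
  obtain ⟨h1, h2, h3⟩ := hc
  obtain ⟨u, hu⟩ := h ![1, 0]
  obtain ⟨w, hw⟩ := h ![0, 1]
  have hu0 : L 0 0 * u 0 + L 0 1 * u 1 + L 0 2 * u 2 = 1 := by
    have := congrFun hu 0
    simpa [Matrix.mulVec, Fin.sum_univ_three, dotProduct] using this
  have hu1 : L 1 0 * u 0 + L 1 1 * u 1 + L 1 2 * u 2 = 0 := by
    have := congrFun hu 1
    simpa [Matrix.mulVec, Fin.sum_univ_three, dotProduct] using this
  have hw1 : L 1 0 * w 0 + L 1 1 * w 1 + L 1 2 * w 2 = 1 := by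
    have := congrFun hw 1
    simpa [Matrix.mulVec, Fin.sum_univ_three, dotProduct] using this
  have hd : L 1 0 = 0 := by
    linear_combination -L 1 0 * hu0 + L 0 0 * hu1 - u 1 * h1 - u 2 * h2
  have he : L 1 1 = 0 := by
    linear_combination -L 1 1 * hu0 + L 0 1 * hu1 + u 0 * h1 - u 2 * h3
  have hf : L 1 2 = 0 := by
    linear_combination -L 1 2 * hu0 + L 0 2 * hu1 + u 0 * h2 + u 1 * h3
  rw [hd, he, hf] at hw1
  linarith

lemma fwd_case (L : Matrix (Fin 2) (Fin 3) ℝ) (i j k : Fin 3)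
    (hsum : ∀ (w : Fin 3 → ℝ) (t : Fin 2), L.mulVec w t = L t i * w i + L t j * w j + L t k * w k)
    (hdet : L 0 i * L 1 j - L 0 j * L 1 i ≠ 0) :
    ∃ (c₁ c₂ : ℝ) (M : Matrix (Fin 2) (Fin 2) ℝ), IsUnit M.det ∧
      ∀ w : Fin 3 → ℝ, L.mulVec w = M.mulVec ![w i + c₁ * w k, w j + c₂ * w k] := by
  set M : Matrix (Fin 2) (Fin 2) ℝ := !![L 0 i, L 0 j; L 1 i, L 1 j] with hM
  have hdetM : M.det = L 0 i * L 1 j - L 0 j * L 1 i := by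
    simp [hM, Matrix.det_fin_two_of]
  have hunit : IsUnit M.det := by rw [hdetM]; exact isUnit_iff_ne_zero.mpr hdet
  set c : Fin 2 → ℝ := M⁻¹.mulVec ![L 0 k, L 1 k] with hc
  have hMc : M.mulVec c = ![L 0 k, L 1 k] := by
    rw [hc, Matrix.mulVec_mulVec, Matrix.mul_nonsing_inv _ hunit, Matrix.one_mulVec]
  refine ⟨c 0, c 1, M, hunit, fun w => funext fun t => ?_⟩
  have hct := congrFun hMc t
  rw [hsum]
  fin_cases t <;>
    simp [Matrix.mulVec, dotProduct, Fin.sum_univ_two, hM] at hct ⊢ <;>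
    linear_combination (-(w k)) * hct

lemma bwd_rank (M : Matrix (Fin 2) (Fin 2) ℝ) (hM : IsUnit M.det)
    (P : Matrix (Fin 2) (Fin 3) ℝ) (hP : Function.Surjective P.mulVec) :
    (M * P).rank = 2 := by
  rw [rank2_iff_surj]
  intro y
  obtain ⟨u, hu⟩ := hP (M⁻¹.mulVec y)
  refine ⟨u, ?_⟩
  rw [← Matrix.mulVec_mulVec, hu, Matrix.mulVec_mulVec, Matrix.mul_nonsing_inv _ hM,
    Matrix.one_mulVec]

/-- Affine projection criterion for lists of points: (z¹,…,zᵐ) in ℝ³ projects onto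
(x¹,…,xᵐ) in ℝ² by an affine projection iff there exist c₁, c₂ ∈ ℝ, an ordered triple
(i,j,k) ∈ {(1,2,3),(1,3,2),(2,3,1)}, and an invertible affine transformation A of ℝ²
with xʳ = A(z_iʳ + c₁ z_kʳ, z_jʳ + c₂ z_kʳ) for all r. -/
theorem affine_projection_criterion_for_point_lists
    (m : ℕ) (z : Fin m → Fin 3 → ℝ) (x : Fin m → Fin 2 → ℝ) :
    (∃ (L : Matrix (Fin 2) (Fin 3) ℝ) (v : Fin 2 → ℝ),
      L.rank = 2 ∧ ∀ r, x r = L.mulVec (z r) + v) ↔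
    (∃ (c₁ c₂ : ℝ) (i j k : Fin 3),
      ((i, j, k) = ((0 : Fin 3), (1 : Fin 3), (2 : Fin 3)) ∨
       (i, j, k) = ((0 : Fin 3), (2 : Fin 3), (1 : Fin 3)) ∨
       (i, j, k) = ((1 : Fin 3), (2 : Fin 3), (0 : Fin 3))) ∧
      ∃ (M : Matrix (Fin 2) (Fin 2) ℝ) (b : Fin 2 → ℝ), IsUnit M.det ∧
        ∀ r, x r = M.mulVec ![z r i + c₁ * z r k, z r j + c₂ * z r k] + b) := by
  constructor
  · rintro ⟨L, v, hrank, hx⟩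
    have hsurj := (rank2_iff_surj L).mp hrank
    rcases exists_minor L hsurj with hd | hd | hd
    · obtain ⟨c₁, c₂, M, hM, hMw⟩ := fwd_case L 0 1 2 (by
        intro w t; simp [Matrix.mulVec, dotProduct, Fin.sum_univ_three]) hd
      exact ⟨c₁, c₂, 0, 1, 2, Or.inl rfl, M, v, hM, fun r => by rw [hx r, hMw (z r)]⟩
    · obtain ⟨c₁, c₂, M, hM, hMw⟩ := fwd_case L 0 2 1 (by
        intro w t; simp [Matrix.mulVec, dotProduct, Fin.sum_univ_three]; ring) hd
      exact ⟨c₁, c₂, 0, 2, 1, Or.inr (Or.inl rfl), M, v, hM, fun r => by rw [hx r, hMw (z r)]⟩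
    · obtain ⟨c₁, c₂, M, hM, hMw⟩ := fwd_case L 1 2 0 (by
        intro w t; simp [Matrix.mulVec, dotProduct, Fin.sum_univ_three]; ring) hd
      exact ⟨c₁, c₂, 1, 2, 0, Or.inr (Or.inr rfl), M, v, hM, fun r => by rw [hx r, hMw (z r)]⟩
  · rintro ⟨c₁, c₂, i, j, k, hijk, M, b, hM, hx⟩
    rcases hijk with h | h | h <;>
      [skip; skip; skip] <;>
      simp only [Prod.mk.injEq] at h <;>
      obtain ⟨rfl, rfl, rfl⟩ := h
    · refine ⟨M * !![1, 0, c₁; 0, 1, c₂], b, bwd_rank M hM _ ?_, fun r => ?_⟩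
      · intro y
        exact ⟨![y 0, y 1, 0], by
          funext t; fin_cases t <;>
            simp [Matrix.mulVec, dotProduct, Fin.sum_univ_three]⟩
      · have hP : Matrix.mulVec !![1, 0, c₁; 0, 1, c₂] (z r) = ![z r 0 + c₁ * z r 2, z r 1 + c₂ * z r 2] := by
          funext t; fin_cases t <;>
            simp [Matrix.mulVec, dotProduct, Fin.sum_univ_three] <;> ring
        rw [hx r, ← Matrix.mulVec_mulVec, hP]
    · refine ⟨M * !![1, c₁, 0; 0, c₂, 1], b, bwd_rank M hM _ ?_, fun r => ?_⟩
      · intro y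
        exact ⟨![y 0, 0, y 1], by
          funext t; fin_cases t <;>
            simp [Matrix.mulVec, dotProduct, Fin.sum_univ_three]⟩
      · have hP : Matrix.mulVec !![1, c₁, 0; 0, c₂, 1] (z r) = ![z r 0 + c₁ * z r 1, z r 2 + c₂ * z r 1] := by
          funext t; fin_cases t <;>
            simp [Matrix.mulVec, dotProduct, Fin.sum_univ_three] <;> ring
        rw [hx r, ← Matrix.mulVec_mulVec, hP]
    · refine ⟨M * !![c₁, 1, 0; c₂, 0, 1], b, bwd_rank M hM _ ?_, fun r => ?_⟩
      · intro y
        exact ⟨![0, y 0, y 1], by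
          funext t; fin_cases t <;>
            simp [Matrix.mulVec, dotProduct, Fin.sum_univ_three]⟩
      · have hP : Matrix.mulVec !![c₁, 1, 0; c₂, 0, 1] (z r) = ![z r 1 + c₁ * z r 0, z r 2 + c₂ * z r 0] := by
          funext t; fin_cases t <;>
            simp [Matrix.mulVec, dotProduct, Fin.sum_univ_three] <;> ring
        rw [hx r, ← Matrix.mulVec_mulVec, hP]
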